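/- arXiv:1709.08434 — 9 statements merged into one kernel-verified Lean document; each statement's English description precedes it below -/
import Mathlib

section
/- Correctness of proof-of-possession verification (Eq. (2)) in the DPDP scheme with public verifiability and data privacy of Gritti et al.: let I be a finite set of challenged indices, let each challenged block m_i = (m_{i,1}, …, m_{i,s}) have a tag T_{m_i} ∈ G₁ satisfying the tag relation T_{m_i}^a = ∏_{j=1}^s h_j^{m_{i,j}}, let v_i ∈ ℤ (for i ∈ I) be the challenge coefficients and r_j ∈ ℤ (for j = 1, …, s) be the server's randomness, and set R_j = h_j^{r_j}, b_j = (∑_{i∈I} m_{i,j}·v_i) + r_j, B_j = h_j^{b_j}, and c = ∏_{i∈I} T_{m_i}^{v_i}. Then e(c, g₂^a) · e(∏_{j=1}^s R_j, g₂) = e(∏_{j=1}^s B_j, g₂). -/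
lemma zpow_sum_aux {G : Type*} [CommGroup G] (x : G) {ι : Type*} (s : Finset ι)
    (f : ι → ℤ) : x ^ (∑ i ∈ s, f i) = ∏ i ∈ s, x ^ f i := by
  induction s using Finset.cons_induction with
  | empty => simp
  | cons a s ha ih => simp [Finset.sum_cons, Finset.prod_cons, zpow_add, ih]

/-- Correctness of proof-of-possession verification (Eq. (2)) in the DPDP
scheme of Gritti et al. -/
theorem dpdp_checkProof_correct
    {G₁ G₂ GT : Type*} [CommGroup G₁] [CommGroup G₂] [CommGroup GT]
    (e : G₁ → G₂ → GT)
    (he₁ : ∀ x y z, e (x * y) z = e x z * e y z)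
    (he₂ : ∀ x z w, e x (z * w) = e x z * e x w)
    (g₂ : G₂) (a : ℤ) (s : ℕ) (h : Fin s → G₁)
    {ι : Type*} (I : Finset ι)
    (m : ι → Fin s → ℤ) (T : ι → G₁)
    (hT : ∀ i ∈ I, (T i) ^ a = ∏ j, (h j) ^ (m i j))
    (v : ι → ℤ) (r : Fin s → ℤ)
    (R : Fin s → G₁) (hR : ∀ j, R j = (h j) ^ (r j))
    (B : Fin s → G₁)
    (hB : ∀ j, B j = (h j) ^ ((∑ i ∈ I, m i j * v i) + r j))
    (c : G₁) (hc : c = ∏ i ∈ I, (T i) ^ (v i)) :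
    e c (g₂ ^ a) * e (∏ j, R j) g₂ = e (∏ j, B j) g₂ := by
  -- `e (-) g₂` as a monoid hom
  set F : G₁ →* GT := MonoidHom.mk' (fun x => e x g₂) (fun x y => he₁ x y g₂) with hF
  -- `e x (-)` as a monoid hom, to move the exponent `a`
  have key : ∀ x : G₁, e x (g₂ ^ a) = F (x ^ a) := by
    intro x
    have h1 : e x (g₂ ^ a) = e x g₂ ^ a := map_zpow (MonoidHom.mk' (e x) (he₂ x)) g₂ a
    rw [h1, map_zpow F x a]
    rfl
  rw [key]
  show F (c ^ a) * F (∏ j, R j) = F (∏ j, B j)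
  rw [← map_mul, hc]
  congr 1
  calc (∏ i ∈ I, T i ^ v i) ^ a * ∏ j, R j
      = (∏ i ∈ I, ∏ j, h j ^ (m i j * v i)) * ∏ j, R j := by
        rw [← Finset.prod_zpow]
        congr 1
        refine Finset.prod_congr rfl fun i hi => ?_
        rw [← zpow_mul, mul_comm, zpow_mul, hT i hi, ← Finset.prod_zpow]
        exact Finset.prod_congr rfl fun j _ => by rw [← zpow_mul]
    _ = (∏ j, ∏ i ∈ I, h j ^ (m i j * v i)) * ∏ j, R j := by
        rw [Finset.prod_comm]
    _ = ∏ j, B j := by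
        rw [← Finset.prod_mul_distrib]
        refine Finset.prod_congr rfl fun j _ => ?_
        rw [hR, hB, zpow_add, zpow_sum_aux]
end

section
/- Correctness of the updating-proof verification (Eq. (1)) in the DPDP scheme of Gritti et al.: let the block m_l = (m_{l,1}, …, m_{l,s}) have a tag T_{m_l} ∈ G₁ satisfying T_{m_l}^a = ∏_{j=1}^s h_j^{m_{l,j}}, let w_l ∈ ℤ and u_j ∈ ℤ (for j = 1, …, s) be the server's randomness, and set U_j = h_j^{u_j}, c_j = m_{l,j}·w_l + u_j, C_j = h_j^{c_j}, and d = T_{m_l}^{w_l}. Then e(d, g₂^a) · e(∏_{j=1}^s U_j, g₂) = e(∏_{j=1}^s C_j, g₂). -/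
/-- Correctness of the updating-proof verification (Eq. (1)) in the DPDP
scheme of Gritti et al. -/
theorem dpdp_checkOp_correct
    {G₁ G₂ GT : Type*} [CommGroup G₁] [CommGroup G₂] [CommGroup GT]
    (e : G₁ → G₂ → GT)
    (he₁ : ∀ x y z, e (x * y) z = e x z * e y z)
    (he₂ : ∀ x z w, e x (z * w) = e x z * e x w)
    (g₂ : G₂) (a : ℤ) (s : ℕ) (h : Fin s → G₁)
    (m : Fin s → ℤ) (T : G₁)
    (hT : T ^ a = ∏ j, (h j) ^ (m j))
    (w : ℤ) (u : Fin s → ℤ)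
    (U : Fin s → G₁) (hU : ∀ j, U j = (h j) ^ (u j))
    (C : Fin s → G₁) (hC : ∀ j, C j = (h j) ^ (m j * w + u j))
    (d : G₁) (hd : d = T ^ w) :
    e d (g₂ ^ a) * e (∏ j, U j) g₂ = e (∏ j, C j) g₂ := by
  have h1 : ∀ z, e 1 z = 1 := by
    intro z
    have := he₁ 1 1 z
    simp only [mul_one] at this
    exact (left_eq_mul.mp this)
  have h2 : ∀ x, e x 1 = 1 := by
    intro x
    have := he₂ x 1 1
    simp only [mul_one] at this
    exact (left_eq_mul.mp this)
  -- e as hom in the first argument (with second argument g₂)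
  let F : G₁ →* GT := ⟨⟨fun x => e x g₂, h1 g₂⟩, fun x y => he₁ x y g₂⟩
  have hF : ∀ x, F x = e x g₂ := fun _ => rfl
  -- e d in the second argument
  let Gd : G₂ →* GT := ⟨⟨fun z => e d z, h2 d⟩, fun z w => he₂ d z w⟩
  have hGd : Gd g₂ = F (T ^ w) := by rw [hF]; show e d g₂ = e (T ^ w) g₂; rw [hd]
  have step1 : e d (g₂ ^ a) = F (T ^ (w * a)) := by
    show Gd (g₂ ^ a) = _
    rw [map_zpow, hGd, ← map_zpow, ← zpow_mul]
  have key : T ^ (w * a) * (∏ j, U j) = ∏ j, C j := by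
    rw [mul_comm w a, zpow_mul, hT, funext hU, funext hC]
    rw [← Finset.prod_zpow, ← Finset.prod_mul_distrib]
    refine Finset.prod_congr rfl fun j _ => ?_
    rw [← zpow_mul, ← zpow_add]
  rw [step1, ← hF, ← map_mul, key, hF]
end

section
/- Replace attack against the DPDP scheme of Gritti et al. (Eq. (3)): suppose the server stores only the single block m₁ = (m_{1,1}, …, m_{1,s}) and its tag T_{m₁} ∈ G₁ satisfying T_{m₁}^a = ∏_{j=1}^s h_j^{m_{1,j}}. For any finite challenge set I with coefficients v_i ∈ ℤ (i ∈ I) and any r_j ∈ ℤ (j = 1, …, s), if the server answers with c = ∏_{i∈I} T_{m₁}^{v_i}, R_j = h_j^{r_j} and B_j = h_j^{(∑_{i∈I} m_{1,j}·v_i) + r_j}, then the verification equation e(c, g₂^a) · e(∏_{j=1}^s R_j, g₂) = e(∏_{j=1}^s B_j, g₂) holds; thus the proof passes verification although the server possesses only one block instead of the |I| challenged blocks. -/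
lemma prod_const_zpow {G : Type*} [CommGroup G] (T : G) {ι : Type*}
    (I : Finset ι) (v : ι → ℤ) : ∏ i ∈ I, T ^ v i = T ^ ∑ i ∈ I, v i := by
  induction I using Finset.cons_induction with
  | empty => simp
  | cons i s hi ih => rw [Finset.prod_cons, Finset.sum_cons, zpow_add, ih]

/-- Replace attack against the DPDP scheme of Gritti et al. (Eq. (3)):
a proof computed from the single stored block `m₁` passes verification. -/
theorem dpdp_replace_attack
    {G₁ G₂ GT : Type*} [CommGroup G₁] [CommGroup G₂] [CommGroup GT]
    (e : G₁ → G₂ → GT)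
    (he₁ : ∀ x y z, e (x * y) z = e x z * e y z)
    (he₂ : ∀ x z w, e x (z * w) = e x z * e x w)
    (g₂ : G₂) (a : ℤ) (s : ℕ) (h : Fin s → G₁)
    (m₁ : Fin s → ℤ) (T₁ : G₁)
    (hT₁ : T₁ ^ a = ∏ j, (h j) ^ (m₁ j))
    {ι : Type*} (I : Finset ι) (v : ι → ℤ) (r : Fin s → ℤ)
    (c : G₁) (hc : c = ∏ i ∈ I, T₁ ^ (v i))
    (R : Fin s → G₁) (hR : ∀ j, R j = (h j) ^ (r j))
    (B : Fin s → G₁)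
    (hB : ∀ j, B j = (h j) ^ ((∑ i ∈ I, m₁ j * v i) + r j)) :
    e c (g₂ ^ a) * e (∏ j, R j) g₂ = e (∏ j, B j) g₂ := by
  have hzL : ∀ (z : G₂) (x : G₁) (n : ℤ), e (x ^ n) z = e x z ^ n := fun z x n =>
    (MonoidHom.mk' (fun x => e x z) (fun a b => he₁ a b z)).map_zpow x n
  have hzR : ∀ (x : G₁) (z : G₂) (n : ℤ), e x (z ^ n) = e x z ^ n := fun x z n =>
    (MonoidHom.mk' (fun z => e x z) (fun a b => he₂ x a b)).map_zpow z n
  have hcT : c = T₁ ^ (∑ i ∈ I, v i) := by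
    rw [hc, prod_const_zpow]
  have key : c ^ a * ∏ j, R j = ∏ j, B j := by
    have : c ^ a = ∏ j, (h j) ^ (m₁ j * ∑ i ∈ I, v i) := by
      rw [hcT, ← zpow_mul, mul_comm, zpow_mul, hT₁, ← Finset.prod_zpow]
      exact Finset.prod_congr rfl fun j _ => by rw [← zpow_mul]
    rw [this, ← Finset.prod_mul_distrib]
    refine Finset.prod_congr rfl fun j _ => ?_
    rw [hR, hB, ← zpow_add, Finset.mul_sum]
  calc e c (g₂ ^ a) * e (∏ j, R j) g₂
      = e (c ^ a) g₂ * e (∏ j, R j) g₂ := by rw [hzR, hzL]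
    _ = e (c ^ a * ∏ j, R j) g₂ := (he₁ _ _ _).symm
    _ = e (∏ j, B j) g₂ := by rw [key]
end

section
/- Replay attack against the DPDP scheme of Gritti et al. (Eq. (4)): let m_i = (m_{i,1}, …, m_{i,s}) be the old block with tag T_{m_i} ∈ G₁ satisfying T_{m_i}^a = ∏_{j=1}^s h_j^{m_{i,j}}, and let m_i' be any new block (with its tag T_{m_i'}) that the client requested to replace m_i. If the server ignores the update and answers with d = T_{m_i}^{w_i}, U_j = h_j^{u_j} and C_j = h_j^{m_{i,j}·w_i + u_j} for arbitrary integers w_i, u_1, …, u_s, then the update-verification equation e(d, g₂^a) · e(∏_{j=1}^s U_j, g₂) = e(∏_{j=1}^s C_j, g₂) holds; hence the updating proof computed entirely from the old block m_i passes verification, for every choice of the new block m_i'. -/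
/-- Replay attack against the DPDP scheme of Gritti et al. (Eq. (4)):
the updating proof computed entirely from the old block `m` passes
verification, for every choice of the new block `m'` (with its tag `T'`). -/
theorem dpdp_replay_attack
    {G₁ G₂ GT : Type*} [CommGroup G₁] [CommGroup G₂] [CommGroup GT]
    (e : G₁ → G₂ → GT)
    (he₁ : ∀ x y z, e (x * y) z = e x z * e y z)
    (he₂ : ∀ x z w, e x (z * w) = e x z * e x w)
    (g₂ : G₂) (a : ℤ) (s : ℕ) (h : Fin s → G₁)
    (m : Fin s → ℤ) (T : G₁)
    (hT : T ^ a = ∏ j, (h j) ^ (m j))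
    (m' : Fin s → ℤ) (T' : G₁)
    (hT' : T' ^ a = ∏ j, (h j) ^ (m' j))
    (w : ℤ) (u : Fin s → ℤ)
    (d : G₁) (hd : d = T ^ w)
    (U : Fin s → G₁) (hU : ∀ j, U j = (h j) ^ (u j))
    (C : Fin s → G₁) (hC : ∀ j, C j = (h j) ^ (m j * w + u j)) :
    e d (g₂ ^ a) * e (∏ j, U j) g₂ = e (∏ j, C j) g₂ := by

  -- bilinearity as monoid homs
  let F : G₂ → G₁ →* GT := fun z => MonoidHom.mk' (fun x => e x z) (fun x y => he₁ x y z)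
  let K : G₁ → G₂ →* GT := fun x => MonoidHom.mk' (fun z => e x z) (fun z w' => he₂ x z w')
  have hpow₂ : ∀ x z (n : ℤ), e x (z ^ n) = (e x z) ^ n := fun x z n => (K x).map_zpow z n
  have hpow₁ : ∀ x z (n : ℤ), e (x ^ n) z = (e x z) ^ n := fun x z n => (F z).map_zpow x n
  have hprod : ∀ (f : Fin s → G₁) z, e (∏ j, f j) z = ∏ j, e (f j) z :=
    fun f z => map_prod (F z) f Finset.univ
  calc e d (g₂ ^ a) * e (∏ j, U j) g₂
      = (e (T ^ a) g₂) ^ w * ∏ j, (e (h j) g₂) ^ (u j) := by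
        rw [hd, hpow₂, hpow₁, ← zpow_mul, mul_comm w a, zpow_mul, ← hpow₁, hprod]
        congr 1
        exact Finset.prod_congr rfl fun j _ => by rw [hU j, hpow₁]
    _ = (∏ j, (e (h j) g₂) ^ (m j)) ^ w * ∏ j, (e (h j) g₂) ^ (u j) := by
        rw [hT, hprod]
        simp only [hpow₁]
    _ = ∏ j, (e (h j) g₂) ^ (m j * w + u j) := by
        rw [← Finset.prod_zpow, ← Finset.prod_mul_distrib]
        exact Finset.prod_congr rfl fun j _ => by rw [← zpow_mul, ← zpow_add]
    _ = e (∏ j, C j) g₂ := by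
        rw [hprod]
        exact (Finset.prod_congr rfl fun j _ => by rw [hC j, hpow₁]).symm
end

section
/- Correctness of the updating-proof verification (Eq. (5)) in the IHT-based DPDP scheme with public verifiability and data privacy: let H_l ∈ G₁ be the hash value H(l, vnb_l) of the rank l and version number vnb_l of the block m_l = (m_{l,1}, …, m_{l,s}), and let the tag T_{m_l} ∈ G₁ satisfy T_{m_l}^a = H_l · ∏_{j=1}^s h_j^{m_{l,j}}. For any integers w_l and u_1, …, u_s, set U_j = h_j^{u_j}, C_j = h_j^{m_{l,j}·w_l + u_j}, and d = T_{m_l}^{w_l}. Then e(d, g₂^a) · e(∏_{j=1}^s U_j, g₂) = e(H_l^{w_l}, g₂) · e(∏_{j=1}^s C_j, g₂). -/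
/-- Correctness of the updating-proof verification (Eq. (5)) in the IHT-based
DPDP scheme with public verifiability and data privacy. -/
theorem iht_dpdp_checkOp_correct
    {G₁ G₂ GT : Type*} [CommGroup G₁] [CommGroup G₂] [CommGroup GT]
    (e : G₁ → G₂ → GT)
    (he₁ : ∀ x y z, e (x * y) z = e x z * e y z)
    (he₂ : ∀ x z w, e x (z * w) = e x z * e x w)
    (g₂ : G₂) (a : ℤ) (s : ℕ) (h : Fin s → G₁)
    (Hl : G₁) (m : Fin s → ℤ) (T : G₁)
    (hT : T ^ a = Hl * ∏ j, (h j) ^ (m j))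
    (w : ℤ) (u : Fin s → ℤ)
    (U : Fin s → G₁) (hU : ∀ j, U j = (h j) ^ (u j))
    (C : Fin s → G₁) (hC : ∀ j, C j = (h j) ^ (m j * w + u j))
    (d : G₁) (hd : d = T ^ w) :
    e d (g₂ ^ a) * e (∏ j, U j) g₂ = e (Hl ^ w) g₂ * e (∏ j, C j) g₂ := by
  have hp1 : ∀ (x : G₁) (z : G₂) (n : ℤ), e (x ^ n) z = e x z ^ n := fun x z n =>
    (MonoidHom.mk' (fun y => e y z) (fun a b => he₁ a b z)).map_zpow x n
  have hp2 : ∀ (x : G₁) (z : G₂) (n : ℤ), e x (z ^ n) = e x z ^ n := fun x z n =>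
    (MonoidHom.mk' (fun y => e x y) (fun a b => he₂ x a b)).map_zpow z n
  have hprod : ∀ (f : Fin s → G₁), e (∏ j, f j) g₂ = ∏ j, e (f j) g₂ := fun f =>
    map_prod (MonoidHom.mk' (fun y => e y g₂) (fun a b => he₁ a b g₂)) f _
  have key : e T g₂ ^ a = e Hl g₂ * ∏ j, e (h j) g₂ ^ m j := by
    rw [← hp1, hT, he₁, hprod]
    simp [hp1]
  subst hd
  simp only [hU, hC, hprod, hp1, hp2]
  calc (e T g₂ ^ a) ^ w * ∏ j, e (h j) g₂ ^ u j
      = (e Hl g₂ * ∏ j, e (h j) g₂ ^ m j) ^ w * ∏ j, e (h j) g₂ ^ u j := by rw [key]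
    _ = e Hl g₂ ^ w * ∏ j, e (h j) g₂ ^ (m j * w + u j) := by
        rw [mul_zpow, ← Finset.prod_zpow, mul_assoc, ← Finset.prod_mul_distrib]
        simp [zpow_add, zpow_mul]
end

section
/- Correctness of the proof-of-possession verification (Eq. (6)) in the IHT-based DPDP scheme with public verifiability and data privacy: let I be a finite set of challenged indices, for each i ∈ I let H_i ∈ G₁ be the hash value H(i, vnb_i) of the rank and version number of the block m_i = (m_{i,1}, …, m_{i,s}), and let the tag T_{m_i} ∈ G₁ satisfy T_{m_i}^a = H_i · ∏_{j=1}^s h_j^{m_{i,j}}. For challenge coefficients v_i ∈ ℤ and randomness r_j ∈ ℤ, set R_j = h_j^{r_j}, B_j = h_j^{(∑_{i∈I} m_{i,j}·v_i) + r_j}, and c = ∏_{i∈I} T_{m_i}^{v_i}. Then e(c, g₂^a) · e(∏_{j=1}^s R_j, g₂) = e(∏_{i∈I} H_i^{v_i}, g₂) · e(∏_{j=1}^s B_j, g₂). -/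
/-- Correctness of the proof-of-possession verification (Eq. (6)) in the
IHT-based DPDP scheme with public verifiability and data privacy. -/
theorem iht_dpdp_checkProof_correct
    {G₁ G₂ GT : Type*} [CommGroup G₁] [CommGroup G₂] [CommGroup GT]
    (e : G₁ → G₂ → GT)
    (he₁ : ∀ x y z, e (x * y) z = e x z * e y z)
    (he₂ : ∀ x z w, e x (z * w) = e x z * e x w)
    (g₂ : G₂) (a : ℤ) (s : ℕ) (h : Fin s → G₁)
    {ι : Type*} (I : Finset ι)
    (H : ι → G₁) (m : ι → Fin s → ℤ) (T : ι → G₁)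
    (hT : ∀ i ∈ I, (T i) ^ a = H i * ∏ j, (h j) ^ (m i j))
    (v : ι → ℤ) (r : Fin s → ℤ)
    (R : Fin s → G₁) (hR : ∀ j, R j = (h j) ^ (r j))
    (B : Fin s → G₁)
    (hB : ∀ j, B j = (h j) ^ ((∑ i ∈ I, m i j * v i) + r j))
    (c : G₁) (hc : c = ∏ i ∈ I, (T i) ^ (v i)) :
    e c (g₂ ^ a) * e (∏ j, R j) g₂ =
      e (∏ i ∈ I, (H i) ^ (v i)) g₂ * e (∏ j, B j) g₂ := by
  -- e is a group hom in each argument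
  have hone₁ : ∀ z, e 1 z = 1 := by
    intro z
    have := he₁ 1 1 z
    simpa using this
  have hone₂ : ∀ x, e x (1 : G₂) = 1 := by
    intro x
    have := he₂ x 1 1
    simpa using this
  let φ : G₁ →* GT :=
    { toFun := fun x => e x g₂, map_one' := hone₁ g₂, map_mul' := fun x y => he₁ x y g₂ }
  have hpow₁ : ∀ (x : G₁) (n : ℤ), e (x ^ n) g₂ = (e x g₂) ^ n := fun x n => φ.map_zpow x n
  have hpow₂ : ∀ (x : G₁) (n : ℤ), e x (g₂ ^ n) = (e x g₂) ^ n := by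
    intro x n
    let ψ : G₂ →* GT :=
      { toFun := fun z => e x z, map_one' := hone₂ x, map_mul' := fun z w => he₂ x z w }
    exact ψ.map_zpow g₂ n
  have zsum : ∀ (x : G₁) (S : Finset ι) (f : ι → ℤ),
      ∏ i ∈ S, x ^ f i = x ^ (∑ i ∈ S, f i) := by
    intro x S f
    induction S using Finset.cons_induction with
    | empty => simp
    | cons i S hi ih => simp [Finset.prod_cons, Finset.sum_cons, ih, zpow_add]
  -- reduce to an identity in G₁
  have key : c ^ a * ∏ j, R j = (∏ i ∈ I, (H i) ^ (v i)) * ∏ j, B j := by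
    have hc' : c ^ a = (∏ i ∈ I, (H i) ^ (v i)) *
        ∏ j, (h j) ^ (∑ i ∈ I, m i j * v i) := by
      rw [hc, ← Finset.prod_zpow]
      have step : (∏ i ∈ I, (T i ^ v i) ^ a)
          = ∏ i ∈ I, (H i ^ v i * ∏ j, ((h j) ^ (m i j)) ^ (v i)) := by
        refine Finset.prod_congr rfl fun i hi => ?_
        rw [← zpow_mul, mul_comm (v i) a, zpow_mul, hT i hi, mul_zpow,
          ← Finset.prod_zpow]
      rw [step, Finset.prod_mul_distrib]
      congr 1
      rw [Finset.prod_comm]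
      refine Finset.prod_congr rfl fun j _ => ?_
      rw [← zsum]
      exact Finset.prod_congr rfl fun i _ => by rw [← zpow_mul]
    calc c ^ a * ∏ j, R j
        = (∏ i ∈ I, (H i) ^ (v i)) *
          ((∏ j, (h j) ^ (∑ i ∈ I, m i j * v i)) * ∏ j, R j) := by
          rw [hc', mul_assoc]
      _ = (∏ i ∈ I, (H i) ^ (v i)) * ∏ j, B j := by
          congr 1
          rw [← Finset.prod_mul_distrib]
          refine Finset.prod_congr rfl fun j _ => ?_
          rw [hR, hB, ← zpow_add]
  calc e c (g₂ ^ a) * e (∏ j, R j) g₂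
      = e (c ^ a * ∏ j, R j) g₂ := by rw [hpow₂, ← hpow₁, ← he₁]
    _ = e ((∏ i ∈ I, (H i) ^ (v i)) * ∏ j, B j) g₂ := by rw [key]
    _ = _ := he₁ _ _ _
end

section
/- Correctness of the proof-of-possession verification (Eq. (7)) in the MHT-based DPDP scheme with public verifiability and data privacy: let I be a finite set of challenged indices, for each i ∈ I let H'_i ∈ G₁ be the Merkle-hash value H'(m_i) of the block m_i = (m_{i,1}, …, m_{i,s}), and let the tag T_{m_i} ∈ G₁ satisfy T_{m_i}^a = H'_i · ∏_{j=1}^s h_j^{m_{i,j}}. For challenge coefficients v_i ∈ ℤ and randomness r_j ∈ ℤ, set R_j = h_j^{r_j}, B_j = h_j^{(∑_{i∈I} m_{i,j}·v_i) + r_j}, and c = ∏_{i∈I} T_{m_i}^{v_i}. Then e(c, g₂^a) · e(∏_{j=1}^s R_j, g₂) = e(∏_{i∈I} (H'_i)^{v_i}, g₂) · e(∏_{j=1}^s B_j, g₂). -/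
private lemma zpow_finset_sum {G : Type*} [CommGroup G] (g : G) {ι : Type*}
    (s : Finset ι) (f : ι → ℤ) : g ^ (∑ i ∈ s, f i) = ∏ i ∈ s, g ^ f i := by
  classical
  induction s using Finset.cons_induction with
  | empty => simp
  | cons i s hi ih => simp [Finset.sum_insert hi, Finset.prod_insert hi, zpow_add, ih]

/-- Correctness of the proof-of-possession verification (Eq. (7)) in the
MHT-based DPDP scheme with public verifiability and data privacy. -/
theorem mht_dpdp_checkProof_correct
    {G₁ G₂ GT : Type*} [CommGroup G₁] [CommGroup G₂] [CommGroup GT]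
    (e : G₁ → G₂ → GT)
    (he₁ : ∀ x y z, e (x * y) z = e x z * e y z)
    (he₂ : ∀ x z w, e x (z * w) = e x z * e x w)
    (g₂ : G₂) (a : ℤ) (s : ℕ) (h : Fin s → G₁)
    {ι : Type*} (I : Finset ι)
    (H' : ι → G₁) (m : ι → Fin s → ℤ) (T : ι → G₁)
    (hT : ∀ i ∈ I, (T i) ^ a = H' i * ∏ j, (h j) ^ (m i j))
    (v : ι → ℤ) (r : Fin s → ℤ)
    (R : Fin s → G₁) (hR : ∀ j, R j = (h j) ^ (r j))
    (B : Fin s → G₁)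
    (hB : ∀ j, B j = (h j) ^ ((∑ i ∈ I, m i j * v i) + r j))
    (c : G₁) (hc : c = ∏ i ∈ I, (T i) ^ (v i)) :
    e c (g₂ ^ a) * e (∏ j, R j) g₂ =
      e (∏ i ∈ I, (H' i) ^ (v i)) g₂ * e (∏ j, B j) g₂ := by
  have hpow₁ : ∀ (x : G₁) (z : G₂) (n : ℤ), e (x ^ n) z = e x z ^ n := fun x z n =>
    (MonoidHom.mk' (fun y => e y z) (fun u w => he₁ u w z)).map_zpow x n
  have hpow₂ : ∀ (x : G₁) (z : G₂) (n : ℤ), e x (z ^ n) = e x z ^ n := fun x z n =>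
    (MonoidHom.mk' (fun w => e x w) (fun u w => he₂ x u w)).map_zpow z n
  have key : c ^ a * ∏ j, R j = (∏ i ∈ I, H' i ^ v i) * ∏ j, B j := by
    subst hc
    have h1 : (∏ i ∈ I, T i ^ v i) ^ a
        = ∏ i ∈ I, (H' i ^ v i * ∏ j, h j ^ (m i j * v i)) := by
      rw [← Finset.prod_zpow]
      refine Finset.prod_congr rfl fun i hi => ?_
      rw [← zpow_mul, mul_comm (v i) a, zpow_mul, hT i hi, mul_zpow, ← Finset.prod_zpow]
      simp [← zpow_mul]
    rw [h1, Finset.prod_mul_distrib, mul_assoc]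
    congr 1
    rw [Finset.prod_comm]
    rw [← Finset.prod_mul_distrib]
    refine Finset.prod_congr rfl fun j _ => ?_
    rw [hR, hB, zpow_add]
    congr 1
    exact (zpow_finset_sum (h j) I fun i => m i j * v i).symm
  calc e c (g₂ ^ a) * e (∏ j, R j) g₂
      = e (c ^ a * ∏ j, R j) g₂ := by rw [he₁, hpow₁, hpow₂]
    _ = e ((∏ i ∈ I, H' i ^ v i) * ∏ j, B j) g₂ := by rw [key]
    _ = _ := he₁ _ _ _
end

section
/- CDH extraction step (first case of the security analysis of the IHT-based DPDP scheme): let G be a commutative group, p a prime, and g ∈ G an element of order p. Let a, b, k ∈ ℤ and β_j, γ_j, Δμ_j ∈ ℤ for j = 1, …, s, and set h_j = g^{β_j} · (g^b)^{γ_j}. Suppose X = ∏_{j=1}^s h_j^{-a·Δμ_j} (the ratio c̃/c of the forged and honest aggregated tags) and suppose k · (∑_{j=1}^s γ_j·Δμ_j) ≡ -1 (mod p). Then (X · (g^a)^{∑_{j=1}^s β_j·Δμ_j})^k = g^{a·b}, i.e., the CDH value g^{ab} is computed from X and public exponents. -/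
private lemma zpow_sum_eq_prod {G : Type*} [CommGroup G] {ι : Type*} (g : G)
    (f : ι → ℤ) (s : Finset ι) : g ^ (∑ i ∈ s, f i) = ∏ i ∈ s, g ^ f i := by
  classical
  induction s using Finset.induction with
  | empty => simp
  | insert _ _ hx ih => simp [Finset.sum_insert hx, Finset.prod_insert hx, zpow_add, ih]

/-- CDH extraction step (first case of the security analysis of the IHT-based
DPDP scheme): the CDH value `g^(a*b)` is computed from the tag ratio `X` and
public exponents. -/
theorem iht_cdh_extraction
    {G : Type*} [CommGroup G] (p : ℕ) (hp : p.Prime)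
    (g : G) (hg : orderOf g = p)
    (s : ℕ) (a b k : ℤ) (β γ Δμ : Fin s → ℤ)
    (h : Fin s → G) (hh : ∀ j, h j = g ^ (β j) * (g ^ b) ^ (γ j))
    (X : G) (hX : X = ∏ j, (h j) ^ (-(a * Δμ j)))
    (hk : k * (∑ j, γ j * Δμ j) ≡ -1 [ZMOD p]) :
    (X * (g ^ a) ^ (∑ j, β j * Δμ j)) ^ k = g ^ (a * b) := by
  set S : ℤ := ∑ j, γ j * Δμ j with hS
  set T : ℤ := ∑ j, β j * Δμ j with hT
  have hX' : X = g ^ ((-a) * T + (-(a*b)) * S) := by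
    rw [hX, hS, hT, Finset.mul_sum, Finset.mul_sum, ← Finset.sum_add_distrib,
      zpow_sum_eq_prod]
    refine Finset.prod_congr rfl fun j _ => ?_
    rw [hh j, ← zpow_mul g b (γ j), mul_zpow, ← zpow_mul, ← zpow_mul, ← zpow_add]
    ring_nf
  have key : (X * (g ^ a) ^ T) ^ k = g ^ ((-(a*b)) * S * k) := by
    rw [hX', ← zpow_mul g a T, ← zpow_add, ← zpow_mul]
    ring_nf
  rw [key]
  have hdvd : (p : ℤ) ∣ (-1 - k * S) := Int.ModEq.dvd hk
  have h1 : g ^ ((-(a*b)) * S * k - a * b) = 1 := by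
    apply zpow_eq_one_iff_modEq.mpr
    show _ ≡ _ [ZMOD (orderOf g : ℤ)]
    rw [hg]
    have : (-(a*b)) * S * k - a * b - 0 = (a*b) * (-1 - k * S) := by ring
    exact (Int.modEq_iff_dvd.mpr (by rw [show (0:ℤ) - ((-(a*b)) * S * k - a*b) = (-(a*b)) * (-1 - k*S) by ring]; exact hdvd.mul_left _))
  have h2 := h1
  rw [zpow_sub] at h2
  exact mul_inv_eq_one.mp h2
end

section
/- DL extraction step (second case of the security analysis of the IHT-based DPDP scheme): let G be a commutative group, p a prime, and g ∈ G an element of order p. Let ξ ∈ ℤ and h = g^ξ, and let y_j, z_j, Δμ_j ∈ ℤ for j = 1, …, s with h_j = g^{y_j} · h^{z_j}. If ∏_{j=1}^s h_j^{Δμ_j} = 1 in G and p does not divide ∑_{j=1}^s z_j·Δμ_j, then the discrete logarithm of h with respect to g is determined modulo p: in ZMod p, (ξ mod p) = -((∑_{j=1}^s y_j·Δμ_j) mod p) · ((∑_{j=1}^s z_j·Δμ_j) mod p)⁻¹. -/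
/-- DL extraction step (second case of the security analysis of the IHT-based
DPDP scheme): the discrete logarithm `ξ` of `h = g^ξ` is determined modulo
`p`. -/
theorem iht_dl_extraction
    {G : Type*} [CommGroup G] (p : ℕ) (hp : p.Prime)
    (g : G) (hg : orderOf g = p)
    (s : ℕ) (ξ : ℤ) (h : G) (hξ : h = g ^ ξ)
    (y z Δμ : Fin s → ℤ)
    (hs : Fin s → G) (hhs : ∀ j, hs j = g ^ (y j) * h ^ (z j))
    (hprod : ∏ j, (hs j) ^ (Δμ j) = 1)
    (hden : ¬ (p : ℤ) ∣ ∑ j, z j * Δμ j) :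
    (ξ : ZMod p) =
      -((∑ j, y j * Δμ j : ℤ) : ZMod p) *
        ((∑ j, z j * Δμ j : ℤ) : ZMod p)⁻¹ := by
  haveI : Fact p.Prime := ⟨hp⟩
  have hsum : ∀ (t : Finset (Fin s)) (f : Fin s → ℤ),
      ∏ j ∈ t, g ^ f j = g ^ (∑ j ∈ t, f j) := by
    intro t f
    induction t using Finset.induction with
    | empty => simp
    | insert _ _ hj ih =>
      rw [Finset.prod_insert hj, Finset.sum_insert hj, ih, zpow_add]
  have key : g ^ (∑ j, (y j + ξ * z j) * Δμ j) = 1 := by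
    rw [← hsum, ← hprod]
    refine Finset.prod_congr rfl fun j _ => ?_
    rw [hhs, hξ, ← zpow_mul, ← zpow_add, ← zpow_mul]
  have hdvd : ((p : ℤ)) ∣ ∑ j, (y j + ξ * z j) * Δμ j := by
    have := (orderOf_dvd_iff_zpow_eq_one (x := g)).mpr key
    rwa [hg] at this
  have hzero : ((∑ j, (y j + ξ * z j) * Δμ j : ℤ) : ZMod p) = 0 :=
    (ZMod.intCast_zmod_eq_zero_iff_dvd _ p).mpr hdvd
  have hZ : ((∑ j, z j * Δμ j : ℤ) : ZMod p) ≠ 0 := fun hc =>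
    hden ((ZMod.intCast_zmod_eq_zero_iff_dvd _ p).mp hc)
  have hzero' : ((∑ j, y j * Δμ j : ℤ) : ZMod p) +
      (ξ : ZMod p) * ((∑ j, z j * Δμ j : ℤ) : ZMod p) = 0 := by
    push_cast at hzero ⊢
    simp only [add_mul] at hzero
    rw [Finset.sum_add_distrib] at hzero
    simp only [mul_assoc, ← Finset.mul_sum] at hzero
    exact hzero
  rw [eq_comm, neg_mul, neg_eq_iff_add_eq_zero, ← div_eq_mul_inv,
    div_add' _ _ _ hZ, div_eq_zero_iff]
  exact Or.inl (by linear_combination hzero')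
end
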